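/- Let A, K, E, a, b, γ, δ be positive real numbers with 0 < γ < δ, 2·E·γ < b < E·δ and K·E > 3. Set c = (b − γ·E)/(b − δ·E), d = γ/(b − γ·E), e = δ/(b − δ·E), u* = (K·E − 1)/(2·E), f(u) = (A/(a·K))·(K − u)·(1 + E·u), and g(u) = −c·(u − d)/(u − e). Assume f(1/E) < g(1/E) and A·K·E/(4·a) > −c. Then there exist u1 ∈ (d, 1/E), u2 ∈ (1/E, u*) and u3 ∈ (u*, K) such that f(ui) = g(ui) for i = 1, 2, 3; consequently (ui, f(ui)) are three distinct equilibria of the kinetic predator-prey system with positive coordinates. -/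

import Mathlib

open Real Set

set_option maxHeartbeats 1600000

theorem three_equilibria_exist (A K E a b γ δ c d e ustar : ℝ)
    (f g : ℝ → ℝ)
    (hA : 0 < A) (hK : 0 < K) (hE : 0 < E) (ha : 0 < a)
    (hγ : 0 < γ) (hγδ : γ < δ)
    (hb1 : 2 * E * γ < b) (hb2 : b < E * δ) (hKE : K * E > 3)
    (hc : c = (b - γ * E) / (b - δ * E))
    (hd : d = γ / (b - γ * E))
    (he : e = δ / (b - δ * E))
    (hustar : ustar = (K * E - 1) / (2 * E))
    (hf : f = fun u => (A / (a * K)) * (K - u) * (1 + E * u))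
    (hg : g = fun u => -c * (u - d) / (u - e))
    (hcross : f (1 / E) < g (1 / E))
    (hvertex : A * K * E / (4 * a) > -c) :
    ∃ u1 u2 u3 : ℝ,
      u1 ∈ Ioo d (1 / E) ∧ u2 ∈ Ioo (1 / E) ustar ∧ u3 ∈ Ioo ustar K ∧
      f u1 = g u1 ∧ f u2 = g u2 ∧ f u3 = g u3 ∧
      u1 ≠ u2 ∧ u1 ≠ u3 ∧ u2 ≠ u3 ∧
      (∀ u ∈ ({u1, u2, u3} : Set ℝ),
        0 < u ∧ 0 < f u ∧
        A * u * (1 - u / K) - a * u * (f u) / (1 + E * u) = 0 ∧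
        -((γ + δ * (f u)) / (1 + f u)) * (f u) + b * u * (f u) / (1 + E * u) = 0) := by
  have hbγ : 0 < b - γ * E := by nlinarith
  have hbδ : b - δ * E < 0 := by nlinarith
  have hcneg : c < 0 := by
    rw [hc]; exact div_neg_of_pos_of_neg hbγ hbδ
  have hd_pos : 0 < d := by rw [hd]; positivity
  have he_neg : e < 0 := by
    rw [he]; exact div_neg_of_pos_of_neg (by linarith) hbδ
  have hd_lt : d < 1 / E := by
    rw [hd, div_lt_div_iff₀ hbγ hE]; nlinarith
  have h1E_lt_ustar : 1 / E < ustar := by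
    rw [hustar, div_lt_div_iff₀ hE (by linarith)]; nlinarith
  have hustar_lt_K : ustar < K := by
    rw [hustar, div_lt_iff₀ (by linarith)]; nlinarith
  have hd_lt_K : d < K := by
    have : 1 / E < K := lt_trans h1E_lt_ustar hustar_lt_K
    linarith
  -- continuity of f - g on [d, K]
  have hcont : ContinuousOn (fun u => f u - g u) (Icc d K) := by
    rw [hf, hg]
    apply ContinuousOn.sub
    · fun_prop
    · apply ContinuousOn.div
      · fun_prop
      · fun_prop
      · intro x hx
        have : d ≤ x := hx.1
        have : 0 < x - e := by linarith
        linarith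
  -- values of h at the four points
  have hgd : g d = 0 := by rw [hg]; simp
  have hhd : 0 < f d - g d := by
    rw [hgd, sub_zero, hf]
    have hKd : 0 < K - d := by linarith
    have h1Ed : 0 < 1 + E * d := by positivity
    have hAaK : 0 < A / (a * K) := by positivity
    exact mul_pos (mul_pos hAaK hKd) h1Ed
  have hh1E : f (1 / E) - g (1 / E) < 0 := by linarith
  have hfu : 0 < f ustar - g ustar := by
    have hgs : g ustar < -c := by
      rw [hg]
      have h1 : 0 < ustar - d := by linarith
      have h2 : 0 < ustar - e := by linarith
      rw [div_lt_iff₀ h2]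
      nlinarith
    have hfeq : f ustar = A * (K * E + 1) ^ 2 / (4 * (a * (K * E))) := by
      rw [hf, hustar]
      simp only
      field_simp
      ring
    have hfs : A * K * E / (4 * a) ≤ f ustar := by
      rw [hfeq, div_le_div_iff₀ (by positivity) (by positivity)]
      nlinarith [mul_pos (mul_pos hA ha) (mul_pos hK hE), mul_pos hA ha]
    linarith
  have hhK : f K - g K < 0 := by
    have hfK : f K = 0 := by rw [hf]; simp
    have hgK : 0 < g K := by
      rw [hg]
      have h1 : 0 < K - d := by linarith
      have h2 : 0 < K - e := by linarith
      have h3 : 0 < -c := by linarith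
      positivity
    linarith
  -- IVT on the three subintervals
  have sub1 : Icc d (1/E) ⊆ Icc d K := Icc_subset_Icc le_rfl (by linarith)
  have sub2 : Icc (1/E) ustar ⊆ Icc d K :=
    Icc_subset_Icc (by linarith) (by linarith)
  have sub3 : Icc ustar K ⊆ Icc d K := Icc_subset_Icc (by linarith) le_rfl
  obtain ⟨u1, hu1mem, hu1⟩ :=
    intermediate_value_Ioo' (le_of_lt hd_lt) (hcont.mono sub1)
      (show (0:ℝ) ∈ Ioo (f (1/E) - g (1/E)) (f d - g d) from ⟨hh1E, hhd⟩)
  obtain ⟨u2, hu2mem, hu2⟩ :=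
    intermediate_value_Ioo (le_of_lt h1E_lt_ustar) (hcont.mono sub2)
      (show (0:ℝ) ∈ Ioo (f (1/E) - g (1/E)) (f ustar - g ustar) from ⟨hh1E, hfu⟩)
  obtain ⟨u3, hu3mem, hu3⟩ :=
    intermediate_value_Ioo' (le_of_lt hustar_lt_K) (hcont.mono sub3)
      (show (0:ℝ) ∈ Ioo (f K - g K) (f ustar - g ustar) from ⟨hhK, hfu⟩)
  simp only at hu1 hu2 hu3
  have hfg1 : f u1 = g u1 := by linarith
  have hfg2 : f u2 = g u2 := by linarith
  have hfg3 : f u3 = g u3 := by linarith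
  refine ⟨u1, u2, u3, hu1mem, hu2mem, hu3mem, hfg1, hfg2, hfg3,
    ne_of_lt (by linarith [hu1mem.2, hu2mem.1]),
    ne_of_lt (by linarith [hu1mem.2, hu2mem.2, hu3mem.1]),
    ne_of_lt (by linarith [hu2mem.2, hu3mem.1]), ?_⟩
  have key : ∀ u : ℝ, d < u → u < K → f u = g u →
      0 < u ∧ 0 < f u ∧
      A * u * (1 - u / K) - a * u * (f u) / (1 + E * u) = 0 ∧
      -((γ + δ * (f u)) / (1 + f u)) * (f u) + b * u * (f u) / (1 + E * u) = 0 := by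
    intro u hdu huK hfgu
    have hu0 : 0 < u := lt_trans hd_pos hdu
    have hue : 0 < u - e := by linarith
    have hgpos : 0 < g u := by
      rw [hg]
      have h1 : 0 < u - d := by linarith
      have h3 : 0 < -c := by linarith
      positivity
    have hfpos : 0 < f u := by rw [hfgu]; exact hgpos
    have h1Eu : (0:ℝ) < 1 + E * u := by positivity
    refine ⟨hu0, hfpos, ?_, ?_⟩
    · rw [hf]
      simp only
      field_simp
      ring
    · have h1fu : (1:ℝ) + f u ≠ 0 := by positivity
      have huene : u - e ≠ 0 := ne_of_gt hue
      have hbγ' : b - γ * E ≠ 0 := ne_of_gt hbγ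
      have hbδ' : b - δ * E ≠ 0 := ne_of_lt hbδ
      have hrel0 : f u * (u - e) = -c * (u - d) := by
        rw [hfgu, hg]
        field_simp
      have e1 : (b - δ * E) * u - δ = (u - e) * (b - δ * E) := by
        rw [he]; field_simp
      have e2 : -c * (u - d) * (b - δ * E) = γ - (b - γ * E) * u := by
        have hbδ'' : b - E * δ ≠ 0 := by rw [mul_comm]; exact hbδ'
        rw [hc, hd]; field_simp; ring
      have hrel : f u * ((b - δ * E) * u - δ) = γ - (b - γ * E) * u := by
        rw [e1, ← mul_assoc, hrel0, e2]
      have h1Eu' : (1:ℝ) + E * u ≠ 0 := ne_of_gt h1Eu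
      field_simp
      linear_combination (f u) * hrel
  intro u hu
  rcases hu with h | h | h <;> rw [h]
  · exact key u1 hu1mem.1 (by linarith [hu1mem.2]) hfg1
  · exact key u2 (by linarith [hu2mem.1, hd_lt]) (by linarith [hu2mem.2, hustar_lt_K]) hfg2
  · exact key u3 (by linarith [hu3mem.1, hd_lt, h1E_lt_ustar]) hu3mem.2 hfg3
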